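/- Let Γ be a finite abelian group. The map sending the class of a 2-cocycle τ : Γ × Γ → ℂˣ to the alternating form α(s,t) = τ(s,t)τ(t,s)⁻¹ induces a group isomorphism H²(Γ, ℂˣ) ≅ Hom(Λ²Γ, ℂˣ), i.e., an isomorphism onto the group of alternating bilinear forms Γ × Γ → ℂˣ. -/

import Mathlib

/-- A normalized 2-cocycle on an abelian group `Γ` with values in `ℂˣ`. -/
def IsNormalizedCocycle {Γ : Type*} [CommGroup Γ] (τ : Γ → Γ → ℂˣ) : Prop :=
  (∀ s t u : Γ, τ s t * τ (s * t) u = τ t u * τ s (t * u)) ∧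
    (∀ s : Γ, τ 1 s = 1) ∧ (∀ s : Γ, τ s 1 = 1)

/-- A 2-coboundary. -/
def IsCoboundary {Γ : Type*} [CommGroup Γ] (τ : Γ → Γ → ℂˣ) : Prop :=
  ∃ ν : Γ → ℂˣ, ∀ s t : Γ, τ s t = ν s * ν t * (ν (s * t))⁻¹

/-- An alternating bilinear form on `Γ` with values in `ℂˣ`. -/
def IsAlternatingBilinear {Γ : Type*} [CommGroup Γ] (α : Γ → Γ → ℂˣ) : Prop :=
  (∀ x y z : Γ, α (x * y) z = α x z * α y z) ∧
    (∀ x y z : Γ, α x (y * z) = α x y * α x z) ∧ (∀ x : Γ, α x x = 1)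

set_option linter.unusedSectionVars false
set_option linter.unusedTactic false

lemma part1 {Γ : Type*} [CommGroup Γ] (τ : Γ → Γ → ℂˣ) (h : IsNormalizedCocycle τ) :
    IsAlternatingBilinear fun s t => τ s t * (τ t s)⁻¹ := by
  obtain ⟨hc, h1, h2⟩ := h
  have key : ∀ x y z : Γ, τ (x * y) z * (τ z (x * y))⁻¹ =
      (τ x z * (τ z x)⁻¹) * (τ y z * (τ z y)⁻¹) := by
    intro x y z
    have e1 := hc x y z
    have e2 := hc x z y
    have e3 := hc z x y
    rw [mul_comm z x] at e3
    rw [mul_comm z y] at e2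
    -- now pass to ℂ
    have f1 := congrArg Units.val e1
    have f2 := congrArg Units.val e2
    have f3 := congrArg Units.val e3
    simp only [Units.val_mul] at f1 f2 f3
    rw [← div_eq_mul_inv, ← div_eq_mul_inv, ← div_eq_mul_inv, div_mul_div_comm,
      div_eq_div_iff_mul_eq_mul]
    have main : τ x y * (τ (x * y) z * (τ z x * τ z y)) =
        τ x y * (τ x z * τ y z * τ z (x * y)) := by
      ext
      simp only [Units.val_mul]
      linear_combination (↑(τ z y) * ↑(τ z x)) * f1 + (↑(τ y z) * ↑(τ x z)) * f3 -
        (↑(τ y z) * ↑(τ z x)) * f2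
    have h' := mul_left_cancel main
    rw [h']
  constructor
  · intro x y z; exact key x y z
  refine ⟨?_, ?_⟩
  · intro x y z
    have := key y z x
    have obs : ∀ a b : Γ, (τ a b * (τ b a)⁻¹)⁻¹ = τ b a * (τ a b)⁻¹ := by
      intro a b; rw [mul_inv, inv_inv, mul_comm]
    calc τ x (y * z) * (τ (y * z) x)⁻¹ = (τ (y*z) x * (τ x (y*z))⁻¹)⁻¹ := by
          rw [mul_inv, inv_inv, mul_comm]
      _ = ((τ y x * (τ x y)⁻¹) * (τ z x * (τ x z)⁻¹))⁻¹ := by rw [key]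
      _ = (τ x y * (τ y x)⁻¹) * (τ x z * (τ z x)⁻¹) := by
          rw [mul_inv, obs, obs]
  · intro x; simp

namespace IsAlternatingBilinear
variable {Γ : Type*} [CommGroup Γ] {α : Γ → Γ → ℂˣ} (h : IsAlternatingBilinear α)
include h

lemma one_apply (y : Γ) : α 1 y = 1 := by
  have := h.1 1 1 y
  rw [mul_one] at this
  exact (mul_eq_left.mp this.symm)

lemma apply_one (x : Γ) : α x 1 = 1 := by
  have := h.2.1 x 1 1
  rw [mul_one] at this
  exact (mul_eq_left.mp this.symm)

lemma skew (x y : Γ) : α y x = (α x y)⁻¹ := by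
  have e : α (x * y) (x * y) = 1 := h.2.2 _
  rw [h.1, h.2.1, h.2.1, h.2.2, h.2.2, one_mul, mul_one] at e
  rw [eq_inv_iff_mul_eq_one, mul_comm]
  exact e

lemma pow_left (x y : Γ) (k : ℕ) : α (x ^ k) y = (α x y) ^ k := by
  induction k with
  | zero => simpa using h.one_apply y
  | succ m ih => rw [pow_succ, h.1, ih, pow_succ]

lemma pow_pow (x : Γ) (k l : ℕ) : α (x ^ k) (x ^ l) = 1 := by
  induction l with
  | zero => simpa using h.apply_one (x ^ k)
  | succ m ih => rw [pow_succ, h.2.1, ih, one_mul, h.pow_left, h.2.2, one_pow]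

end IsAlternatingBilinear

-- diagonal vanishing on a Pi of cyclic groups
section Diag
variable {ι : Type} [Fintype ι] [DecidableEq ι] {n : ι → ℕ} [∀ i, NeZero (n i)]

abbrev Gpi (n : ι → ℕ) := (i : ι) → Multiplicative (ZMod (n i))

lemma mulSingle_eq_pow (i : ι) (a : Multiplicative (ZMod (n i))) :
    (Pi.mulSingle i a : Gpi n) =
      (Pi.mulSingle i (Multiplicative.ofAdd (1 : ZMod (n i))) : Gpi n) ^ (a.toAdd).val := by
  rw [← MonoidHom.mulSingle_apply, ← MonoidHom.mulSingle_apply, ← map_pow]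
  congr 1
  rw [← ofAdd_nsmul]
  congr 1
  rw [nsmul_eq_mul, mul_one, ZMod.natCast_val, ZMod.cast_id]
  exact (ofAdd_toAdd a).symm

lemma diag_vanish {α : Gpi n → Gpi n → ℂˣ} (h : IsAlternatingBilinear α)
    (i : ι) (a b : Multiplicative (ZMod (n i))) :
    α (Pi.mulSingle i a) (Pi.mulSingle i b) = 1 := by
  rw [mulSingle_eq_pow i a, mulSingle_eq_pow i b, h.pow_pow]

end Diag

section Beta
variable {ι : Type} [Fintype ι] [DecidableEq ι] [LinearOrder ι] {n : ι → ℕ} [∀ i, NeZero (n i)]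

/-- bilinear "upper triangular" form built from α -/
def beta (α : Gpi n → Gpi n → ℂˣ) (x y : Gpi n) : ℂˣ :=
  ∏ i, ∏ j, if i < j then α (Pi.mulSingle i (x i)) (Pi.mulSingle j (y j)) else 1

variable {α : Gpi n → Gpi n → ℂˣ} (h : IsAlternatingBilinear α)
include h

lemma beta_mul_left (x x' y : Gpi n) : beta α (x * x') y = beta α x y * beta α x' y := by
  unfold beta
  rw [← Finset.prod_mul_distrib]
  refine Finset.prod_congr rfl fun i _ => ?_
  rw [← Finset.prod_mul_distrib]
  refine Finset.prod_congr rfl fun j _ => ?_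
  split_ifs with hij
  · rw [Pi.mul_apply, ← MonoidHom.mulSingle_apply, map_mul, h.1,
      MonoidHom.mulSingle_apply, MonoidHom.mulSingle_apply]
  · rw [mul_one]

lemma beta_mul_right (x y y' : Gpi n) : beta α x (y * y') = beta α x y * beta α x y' := by
  unfold beta
  rw [← Finset.prod_mul_distrib]
  refine Finset.prod_congr rfl fun i _ => ?_
  rw [← Finset.prod_mul_distrib]
  refine Finset.prod_congr rfl fun j _ => ?_
  split_ifs with hij
  · have e : (Pi.mulSingle j ((y * y') j) : Gpi n) =
        Pi.mulSingle j (y j) * Pi.mulSingle j (y' j) := by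
      rw [Pi.mul_apply, ← MonoidHom.mulSingle_apply, map_mul]; rfl
    rw [e, h.2.1]
  · rw [mul_one]

/-- fixed first argument gives a monoid hom in the second -/
noncomputable def homRight (h : IsAlternatingBilinear α) (x : Gpi n) : Gpi n →* ℂˣ where
  toFun := α x
  map_one' := h.apply_one x
  map_mul' := h.2.1 x

@[simp] lemma homRight_apply (x y : Gpi n) : homRight h x y = α x y := rfl

lemma beta_antisymm (x y : Gpi n) : beta α x y * (beta α y x)⁻¹ = α x y := by
  have e1 : (beta α y x)⁻¹ =
      ∏ i, ∏ j, if j < i then α (Pi.mulSingle i (x i)) (Pi.mulSingle j (y j)) else 1 := by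
    rw [beta, ← Finset.prod_inv_distrib]
    conv_rhs => rw [Finset.prod_comm]
    refine Finset.prod_congr rfl fun i _ => ?_
    rw [← Finset.prod_inv_distrib]
    refine Finset.prod_congr rfl fun j _ => ?_
    split_ifs with hij
    · exact (h.skew _ _).symm
    · exact inv_one
  rw [e1, beta, ← Finset.prod_mul_distrib]
  have e2 : ∀ i : ι, ((∏ j, if i < j then α (Pi.mulSingle i (x i)) (Pi.mulSingle j (y j)) else 1) *
      ∏ j, if j < i then α (Pi.mulSingle i (x i)) (Pi.mulSingle j (y j)) else 1) =
      ∏ j, α (Pi.mulSingle i (x i)) (Pi.mulSingle j (y j)) := by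
    intro i
    rw [← Finset.prod_mul_distrib]
    refine Finset.prod_congr rfl fun j _ => ?_
    rcases lt_trichotomy i j with hij | hij | hij
    · rw [if_pos hij, if_neg (lt_asymm hij), mul_one]
    · subst hij
      rw [if_neg (lt_irrefl i), one_mul]
      exact (diag_vanish h i (x i) (y i)).symm
    · rw [if_neg (not_lt.mpr hij.le), if_pos hij, one_mul]
  rw [Finset.prod_congr rfl fun i _ => e2 i]
  have e3 : ∀ i : ι, (∏ j, α (Pi.mulSingle i (x i)) (Pi.mulSingle j (y j))) =
      α (Pi.mulSingle i (x i)) y := by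
    intro i
    have e := map_prod (homRight h (Pi.mulSingle i (x i)))
      (fun j => (Pi.mulSingle j (y j) : Gpi n)) Finset.univ
    rw [Finset.univ_prod_mulSingle] at e
    simp only [homRight_apply] at e
    exact e.symm
  rw [Finset.prod_congr rfl fun i _ => e3 i]
  have e4 : ∀ i : ι, α (Pi.mulSingle i (x i)) y = (homRight h y (Pi.mulSingle i (x i)))⁻¹ := by
    intro i
    rw [homRight_apply, h.skew]
  rw [Finset.prod_congr rfl fun i _ => e4 i, Finset.prod_inv_distrib]
  have e5 := map_prod (homRight h y) (fun i => (Pi.mulSingle i (x i) : Gpi n)) Finset.univ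
  rw [Finset.univ_prod_mulSingle] at e5
  rw [← e5, homRight_apply, h.skew, inv_inv]

end Beta

lemma part2 {Γ : Type*} [CommGroup Γ] [Fintype Γ] (α : Γ → Γ → ℂˣ)
    (h : IsAlternatingBilinear α) :
    ∃ β : Γ → Γ → ℂˣ,
      (∀ x y z : Γ, β (x * y) z = β x z * β y z) ∧
      (∀ x y z : Γ, β x (y * z) = β x y * β x z) ∧
      (∀ x y : Γ, β x y * (β y x)⁻¹ = α x y) := by
  obtain ⟨ι, hfin, n, hn, ⟨e⟩⟩ := CommGroup.equiv_prod_multiplicative_zmod_of_finite Γ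
  letI : DecidableEq ι := Classical.decEq _
  letI : LinearOrder ι := LinearOrder.lift' (Fintype.equivFin ι) (Equiv.injective _)
  haveI : ∀ i, NeZero (n i) := fun i => ⟨by have := hn i; omega⟩
  set α' : Gpi n → Gpi n → ℂˣ := fun u v => α (e.symm u) (e.symm v) with hα'
  have h' : IsAlternatingBilinear α' := by
    refine ⟨fun u v w => ?_, fun u v w => ?_, fun u => ?_⟩
    · simp only [hα', map_mul]; exact h.1 _ _ _
    · simp only [hα', map_mul]; exact h.2.1 _ _ _
    · exact h.2.2 _
  refine ⟨fun x y => beta α' (e x) (e y), ?_, ?_, ?_⟩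
  · intro x y z
    show beta α' (e (x * y)) (e z) = _
    rw [map_mul]; exact beta_mul_left h' _ _ _
  · intro x y z
    show beta α' (e x) (e (y * z)) = _
    rw [map_mul]; exact beta_mul_right h' _ _ _
  · intro x y
    show beta α' (e x) (e y) * (beta α' (e y) (e x))⁻¹ = _
    rw [beta_antisymm h' (e x) (e y), hα']
    simp

lemma card_monoidHom_complex (G : Type*) [CommGroup G] [Finite G] :
    Nat.card (G →* ℂˣ) = Nat.card G := by
  haveI : NeZero ((Monoid.exponent G : ℂ)) :=
    ⟨by exact_mod_cast (Monoid.exponent_ne_zero_of_finite (G := G))⟩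
  exact Nat.card_congr (CommGroup.monoidHom_mulEquiv_of_hasEnoughRootsOfUnity G ℂ).some.toEquiv

lemma exists_char_extension {E : Type*} [CommGroup E] [Finite E] (A : Subgroup E)
    (φ : A →* ℂˣ) : ∃ χ : E →* ℂˣ, ∀ a : A, χ a = φ a := by
  classical
  -- the restriction homomorphism
  let res : (E →* ℂˣ) →* (A →* ℂˣ) :=
    { toFun := fun χ => χ.comp A.subtype
      map_one' := rfl
      map_mul' := fun χ₁ χ₂ => rfl }
  -- kernel of res is in bijection with characters of the quotient
  have hker : Nat.card res.ker = Nat.card (E ⧸ A →* ℂˣ) := by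
    have mem : ∀ ψ : E ⧸ A →* ℂˣ, ψ.comp (QuotientGroup.mk' A) ∈ res.ker := by
      intro ψ
      rw [MonoidHom.mem_ker]
      ext a
      have ha1 : ((a : E) : E ⧸ A) = 1 := (QuotientGroup.eq_one_iff _).mpr a.2
      simp [res, ha1]
    have lift_mem : ∀ χ : ↥res.ker, ∀ a ∈ A, (χ : E →* ℂˣ) a = 1 := by
      intro χ a ha
      have h2 := χ.2
      rw [MonoidHom.mem_ker] at h2
      simpa [res] using DFunLike.congr_fun h2 ⟨a, ha⟩
    refine Nat.card_congr ⟨fun χ => QuotientGroup.lift A (χ : E →* ℂˣ) (lift_mem χ),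
      fun ψ => ⟨ψ.comp (QuotientGroup.mk' A), mem ψ⟩, ?_, ?_⟩
    · intro χ
      apply Subtype.ext
      ext x
      rfl
    · intro ψ
      apply MonoidHom.ext
      intro q
      induction q using QuotientGroup.induction_on with
      | H x => rfl
  have hcard1 : Nat.card (E →* ℂˣ) = Nat.card res.range * Nat.card res.ker := by
    rw [← Nat.card_congr (QuotientGroup.quotientKerEquivRange res).toEquiv]
    rw [Subgroup.card_eq_card_quotient_mul_card_subgroup res.ker]
  have h1 : Nat.card (E →* ℂˣ) = Nat.card E := card_monoidHom_complex E
  have h2 : Nat.card (A →* ℂˣ) = Nat.card A := card_monoidHom_complex A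
  have h3 : Nat.card (E ⧸ A →* ℂˣ) = Nat.card (E ⧸ A) := card_monoidHom_complex _
  have h4 : Nat.card E = Nat.card (E ⧸ A) * Nat.card A :=
    Subgroup.card_eq_card_quotient_mul_card_subgroup A
  have hpos : 0 < Nat.card (E ⧸ A) := Nat.card_pos
  have hrange : Nat.card res.range = Nat.card (A →* ℂˣ) := by
    have : Nat.card res.range * Nat.card (E ⧸ A) = Nat.card (A →* ℂˣ) * Nat.card (E ⧸ A) := by
      rw [h2]
      calc Nat.card res.range * Nat.card (E ⧸ A)
          = Nat.card res.range * Nat.card res.ker := by rw [hker, h3]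
        _ = Nat.card (E →* ℂˣ) := hcard1.symm
        _ = Nat.card (E ⧸ A) * Nat.card A := by rw [h1, h4]
        _ = Nat.card A * Nat.card (E ⧸ A) := mul_comm _ _
    exact Nat.eq_of_mul_eq_mul_right hpos this
  haveI : Finite (A →* ℂˣ) := by
    have : Nat.card (A →* ℂˣ) ≠ 0 := by
      rw [h2]; exact Nat.card_pos.ne'
    exact (Nat.card_ne_zero.mp this).2
  have htop : res.range = ⊤ := Subgroup.eq_top_of_card_eq _ hrange
  have hsurj : Function.Surjective res := MonoidHom.range_eq_top.mp htop
  obtain ⟨χ, hχ⟩ := hsurj φ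
  exact ⟨χ, fun a => by rw [← hχ]; rfl⟩

@[ext] structure TwExt (Γ A : Type*) where
  g : Γ
  u : A

section TwExtGroup
variable {Γ A : Type*} [CommGroup Γ] [CommGroup A]

def twExtCommGroup (σ : Γ → Γ → A)
    (hc : ∀ s t u, σ s t * σ (s * t) u = σ t u * σ s (t * u))
    (hone : ∀ s, σ 1 s = 1) (hone' : ∀ s, σ s 1 = 1)
    (hsym : ∀ s t, σ s t = σ t s) : CommGroup (TwExt Γ A) where
  mul x y := ⟨x.g * y.g, x.u * y.u * σ x.g y.g⟩
  one := ⟨1, 1⟩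
  inv x := ⟨x.g⁻¹, (x.u * σ x.g⁻¹ x.g)⁻¹⟩
  mul_assoc x y z := by
    refine TwExt.ext (mul_assoc _ _ _) ?_
    show x.u * y.u * σ x.g y.g * z.u * σ (x.g * y.g) z.g =
      x.u * (y.u * z.u * σ y.g z.g) * σ x.g (y.g * z.g)
    calc x.u * y.u * σ x.g y.g * z.u * σ (x.g * y.g) z.g
        = x.u * y.u * z.u * (σ x.g y.g * σ (x.g * y.g) z.g) := by ac_rfl
      _ = x.u * y.u * z.u * (σ y.g z.g * σ x.g (y.g * z.g)) := by rw [hc]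
      _ = x.u * (y.u * z.u * σ y.g z.g) * σ x.g (y.g * z.g) := by ac_rfl
  one_mul x := by
    refine TwExt.ext (one_mul _) ?_
    show 1 * x.u * σ 1 x.g = x.u
    rw [hone, one_mul, mul_one]
  mul_one x := by
    refine TwExt.ext (mul_one _) ?_
    show x.u * 1 * σ x.g 1 = x.u
    rw [hone', mul_one, mul_one]
  inv_mul_cancel x := by
    refine TwExt.ext (inv_mul_cancel _) ?_
    show (x.u * σ x.g⁻¹ x.g)⁻¹ * x.u * σ x.g⁻¹ x.g = 1
    rw [mul_inv, mul_assoc, mul_comm x.u (σ x.g⁻¹ x.g), ← mul_assoc, mul_assoc _ (σ x.g⁻¹ x.g)⁻¹,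
      inv_mul_cancel, mul_one, inv_mul_cancel]
  mul_comm x y := by
    refine TwExt.ext (mul_comm _ _) ?_
    show x.u * y.u * σ x.g y.g = y.u * x.u * σ y.g x.g
    rw [mul_comm x.u y.u, hsym]

end TwExtGroup

lemma exists_nth_root_units' (n : ℕ) (hn : n ≠ 0) (z : ℂˣ) : ∃ w : ℂˣ, w ^ n = z := by
  have hz : (z : ℂ) ≠ 0 := z.ne_zero
  have h : ((z : ℂ) ^ (n⁻¹ : ℂ)) ^ n = (z : ℂ) := Complex.cpow_nat_inv_pow _ hn
  have hne : ((z : ℂ) ^ (n⁻¹ : ℂ)) ≠ 0 := by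
    intro h0
    rw [h0] at h
    simp [zero_pow hn] at h
    exact hz h.symm
  refine ⟨Units.mk0 _ hne, ?_⟩
  ext
  simpa using h

lemma part3 {Γ : Type*} [CommGroup Γ] [Fintype Γ] (τ : Γ → Γ → ℂˣ)
    (h : IsNormalizedCocycle τ) (hsym : ∀ s t : Γ, τ s t = τ t s) :
    ∃ ν : Γ → ℂˣ, ∀ s t : Γ, τ s t = ν s * ν t * (ν (s * t))⁻¹ := by
  classical
  obtain ⟨hc, hone, hone'⟩ := h
  set n := Fintype.card Γ with hn_def
  have hn : n ≠ 0 := Fintype.card_ne_zero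
  set f : Γ → ℂˣ := fun s => ∏ u, τ s u with hf
  have hf1 : f 1 = 1 := by simp [hf, hone]
  have hpow : ∀ s t : Γ, τ s t ^ n * f (s * t) = f s * f t := by
    intro s t
    have e : ∏ u, (τ s t * τ (s * t) u) = ∏ u, (τ t u * τ s (t * u)) :=
      Finset.prod_congr rfl fun u _ => hc s t u
    rw [Finset.prod_mul_distrib, Finset.prod_mul_distrib, Finset.prod_const,
      Finset.card_univ] at e
    have e2 : ∏ u, τ s (t * u) = ∏ u, τ s u :=
      Fintype.prod_equiv (Equiv.mulLeft t) _ _ (fun u => rfl)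
    rw [e2] at e
    rw [← hn_def] at e
    rw [e]
    exact mul_comm _ _
  -- choose roots
  obtain ⟨w, hw⟩ : ∃ w : Γ → ℂˣ, ∀ s, w s ^ n = f s := by
    choose w hw using fun s => exists_nth_root_units' n hn (f s)
    exact ⟨w, hw⟩
  set ν₀ : Γ → ℂˣ := fun s => w s * (w 1)⁻¹ with hν₀
  have hν₀1 : ν₀ 1 = 1 := by simp [hν₀]
  have hν₀pow : ∀ s, ν₀ s ^ n = f s * (f 1)⁻¹ := by
    intro s
    simp only [hν₀, mul_pow, inv_pow, hw]
  have hν₀pow' : ∀ s, ν₀ s ^ n = f s := by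
    intro s; rw [hν₀pow, hf1, inv_one, mul_one]
  set c : Γ → Γ → ℂˣ := fun s t => ν₀ s * ν₀ t * (ν₀ (s * t))⁻¹ with hcdef
  have hcob : ∀ s t u : Γ, c s t * c (s * t) u = c t u * c s (t * u) := by
    intro s t u
    simp only [hcdef]
    rw [mul_assoc s t u]
    ext
    simp only [Units.val_mul, Units.val_inv_eq_inv_val]
    field_simp
  set σ : Γ → Γ → ℂˣ := fun s t => τ s t * (c s t)⁻¹ with hσ
  have hσn : ∀ s t, σ s t ^ n = 1 := by
    intro s t
    have := hpow s t
    ext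
    have h0 := congrArg Units.val this
    simp only [Units.val_mul, Units.val_pow_eq_pow_val] at h0
    simp only [hσ, hcdef, Units.val_pow_eq_pow_val, Units.val_mul, Units.val_inv_eq_inv_val,
      mul_pow, inv_pow, Units.val_one]
    rw [← hν₀pow' s, ← hν₀pow' t, ← hν₀pow' (s * t)] at h0
    simp only [Units.val_pow_eq_pow_val] at h0
    field_simp
    linear_combination h0
  have hσc : ∀ s t u, σ s t * σ (s * t) u = σ t u * σ s (t * u) := by
    intro s t u
    show (τ s t * (c s t)⁻¹) * (τ (s * t) u * (c (s * t) u)⁻¹) =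
      (τ t u * (c t u)⁻¹) * (τ s (t * u) * (c s (t * u))⁻¹)
    rw [mul_mul_mul_comm, ← mul_inv, mul_mul_mul_comm (τ t u), ← mul_inv, hc, hcob]
  have hσone : ∀ s, σ 1 s = 1 := by
    intro s; simp [hσ, hcdef, hone, hν₀1]
  have hσone' : ∀ s, σ s 1 = 1 := by
    intro s; simp [hσ, hcdef, hone', hν₀1]
  have hσsym : ∀ s t, σ s t = σ t s := by
    intro s t
    simp only [hσ, hcdef]
    rw [hsym s t, mul_comm s t, mul_comm (ν₀ s) (ν₀ t)]
  -- lift to roots of unity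
  set A := rootsOfUnity n ℂ with hA
  set σ' : Γ → Γ → A := fun s t => ⟨σ s t, (mem_rootsOfUnity n _).mpr (hσn s t)⟩ with hσ'
  have hc' : ∀ s t u, σ' s t * σ' (s * t) u = σ' t u * σ' s (t * u) := by
    intro s t u; exact Subtype.ext (hσc s t u)
  have hone1' : ∀ s, σ' 1 s = 1 := fun s => Subtype.ext (hσone s)
  have hone2' : ∀ s, σ' s 1 = 1 := fun s => Subtype.ext (hσone' s)
  have hsym' : ∀ s t, σ' s t = σ' t s := fun s t => Subtype.ext (hσsym s t)
  letI : CommGroup (TwExt Γ A) := twExtCommGroup σ' hc' hone1' hone2' hsym'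
  haveI : Finite (TwExt Γ A) :=
    Finite.of_surjective (fun p : Γ × A => TwExt.mk p.1 p.2) (fun x => ⟨(x.g, x.u), rfl⟩)
  -- the embedding of A
  set j : A →* TwExt Γ A :=
    { toFun := fun a => ⟨1, a⟩
      map_one' := rfl
      map_mul' := fun a b => by
        refine TwExt.ext (one_mul 1).symm ?_
        show a * b = a * b * σ' 1 1
        rw [hone1', mul_one] } with hj_def
  have hj : Function.Injective j := by
    intro a b hab
    have := congrArg TwExt.u hab
    exact this
  -- character extending the identity on A
  obtain ⟨χ, hχ⟩ := exists_char_extension j.range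
    (((rootsOfUnity n ℂ).subtype).comp (MonoidHom.ofInjective hj).symm.toMonoidHom)
  have hχj : ∀ a : A, χ (j a) = (a : ℂˣ) := by
    intro a
    have mem : j a ∈ j.range := ⟨a, rfl⟩
    have e1 := hχ ⟨j a, mem⟩
    have e2 : (MonoidHom.ofInjective hj).symm ⟨j a, mem⟩ = a := by
      rw [MulEquiv.symm_apply_eq]
      exact Subtype.ext (MonoidHom.ofInjective_apply hj).symm
    rw [e1]
    simp [e2]
  set ν₁ : Γ → ℂˣ := fun s => χ ⟨s, 1⟩ with hν₁
  have key : ∀ s t : Γ, σ s t = ν₁ s * ν₁ t * (ν₁ (s * t))⁻¹ := by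
    intro s t
    have hm : (TwExt.mk s (1 : A)) * TwExt.mk t 1 = TwExt.mk (s * t) 1 * j (σ' s t) := by
      refine TwExt.ext ?_ ?_
      · show s * t = (s * t) * 1
        rw [mul_one]
      · show (1 : A) * 1 * σ' s t = 1 * σ' s t * σ' (s * t) 1
        rw [hone2']
        simp
    have e0 := congrArg χ hm
    rw [map_mul, map_mul, hχj] at e0
    have e1 : χ (TwExt.mk s 1) * χ (TwExt.mk t 1) = χ (TwExt.mk (s * t) 1) * σ s t := e0
    show σ s t = χ (TwExt.mk s 1) * χ (TwExt.mk t 1) * (χ (TwExt.mk (s * t) 1))⁻¹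
    rw [e1, mul_comm (χ (TwExt.mk (s * t) 1)) (σ s t), mul_assoc, mul_inv_cancel, mul_one]
  refine ⟨fun s => ν₀ s * ν₁ s, fun s t => ?_⟩
  have e := key s t
  simp only [hσ, hcdef] at e
  ext
  have e0 := congrArg Units.val e
  simp only [Units.val_mul, Units.val_inv_eq_inv_val] at e0
  simp only [Units.val_mul, Units.val_inv_eq_inv_val]
  field_simp at e0 ⊢
  linear_combination e0

theorem stmt_5 (Γ : Type*) [CommGroup Γ] [Fintype Γ] :
    -- the map is well defined: the associated form of a cocycle is alternating bilinear
    (∀ τ : Γ → Γ → ℂˣ, IsNormalizedCocycle τ →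
        IsAlternatingBilinear fun s t => τ s t * (τ t s)⁻¹) ∧
    -- it is surjective onto alternating bilinear forms
    (∀ α : Γ → Γ → ℂˣ, IsAlternatingBilinear α →
        ∃ τ : Γ → Γ → ℂˣ, IsNormalizedCocycle τ ∧
          ∀ s t : Γ, α s t = τ s t * (τ t s)⁻¹) ∧
    -- its kernel consists exactly of the coboundaries, so it induces an
    -- isomorphism H²(Γ, ℂˣ) ≅ Hom(Λ²Γ, ℂˣ)
    (∀ τ : Γ → Γ → ℂˣ, IsNormalizedCocycle τ →
        ((∀ s t : Γ, τ s t * (τ t s)⁻¹ = 1) ↔ IsCoboundary τ)) := by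
  refine ⟨fun τ h => part1 τ h, ?_, ?_⟩
  · intro α hα
    obtain ⟨β, hβ1, hβ2, hβ3⟩ := part2 α hα
    have hβone : ∀ s : Γ, β 1 s = 1 := by
      intro s
      have := hβ1 1 1 s
      rw [one_mul] at this
      exact (mul_eq_right.mp this.symm)
    have hβone' : ∀ s : Γ, β s 1 = 1 := by
      intro s
      have := hβ2 s 1 1
      rw [one_mul] at this
      exact (mul_eq_right.mp this.symm)
    refine ⟨β, ⟨fun s t u => ?_, hβone, hβone'⟩, fun s t => (hβ3 s t).symm⟩
    · rw [hβ1, hβ2]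
      ac_rfl
  · intro τ h
    constructor
    · intro hker
      have hsym : ∀ s t : Γ, τ s t = τ t s := fun s t => mul_inv_eq_one.mp (hker s t)
      obtain ⟨ν, hν⟩ := part3 τ h hsym
      exact ⟨ν, hν⟩
    · rintro ⟨ν, hν⟩ s t
      rw [hν s t, hν t s, mul_comm t s, mul_comm (ν t) (ν s)]
      exact mul_inv_cancel _
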